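/- Let Δ be the unit equilateral triangle in ℝ² with vertices (0,0), (1,0), (1/2, √3/2). The Minkowski sum (1/2)•Δ + (1/2)•(−Δ) (a regular hexagon) can hide behind Δ, and its area equals (3/2) · area(Δ) = 3√3/8. -/

import Mathlib

open scoped Pointwise
open MeasureTheory

/-- Orthogonal projection of a point onto the hyperplane `u^⊥`. -/
noncomputable def proj {n : ℕ} (u x : EuclideanSpace ℝ (Fin n)) : EuclideanSpace ℝ (Fin n) :=
  (Submodule.orthogonalProjectionOnto (ℝ ∙ u)ᗮ x : EuclideanSpace ℝ (Fin n))

/-- `A` can hide behind `B`: for every unit direction `u` there is a translation vector in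
`u^⊥` moving the shadow of `A` inside the shadow of `B`. -/
def HidesBehind {n : ℕ} (A B : Set (EuclideanSpace ℝ (Fin n))) : Prop :=
  ∀ u : EuclideanSpace ℝ (Fin n), ‖u‖ = 1 →
    ∃ v ∈ (ℝ ∙ u)ᗮ, v +ᵥ (proj u '' A) ⊆ proj u '' B

/-- The unit equilateral triangle in `ℝ²`. -/
noncomputable def Δ : Set (EuclideanSpace ℝ (Fin 2)) :=
  convexHull ℝ {!₂[0, 0], !₂[1, 0], !₂[1/2, Real.sqrt 3 / 2]}

namespace HexAux
open scoped RealInnerProductSpace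

abbrev E2 := EuclideanSpace ℝ (Fin 2)
noncomputable def pt (a b : ℝ) : E2 := !₂[a, b]

@[simp] lemma pt0 (a b : ℝ) : pt a b 0 = a := rfl
@[simp] lemma pt1 (a b : ℝ) : pt a b 1 = b := rfl

lemma inner_pt (a b : ℝ) (x : E2) : (inner ℝ (pt a b) x : ℝ) = a * x 0 + b * x 1 := by
  simp [pt, PiLp.inner_apply, Fin.sum_univ_two, mul_comm]

lemma tri_eq : Δ = convexHull ℝ ({pt 0 0, pt 1 0, pt (1/2) (Real.sqrt 3 / 2)} : Set E2) := rfl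

lemma norm_sq (u : E2) (hu : ‖u‖ = 1) : u 0 * u 0 + u 1 * u 1 = 1 := by
  have h := real_inner_self_eq_norm_sq u
  rw [hu] at h
  rw [PiLp.inner_apply, Fin.sum_univ_two] at h
  simp only [RCLike.inner_apply, conj_trivial] at h
  nlinarith [h]

/-- key formula for the projection, `w = (-u₁, u₀)`. -/
lemma proj_formula (u : E2) (hu : ‖u‖ = 1) (x : E2) :
    proj u x = (inner ℝ (pt (-(u 1)) (u 0)) x : ℝ) • pt (-(u 1)) (u 0) := by
  set w : E2 := pt (-(u 1)) (u 0) with hw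
  have hnorm := norm_sq u hu
  have hwmem : ((inner ℝ w x : ℝ)) • w ∈ (ℝ ∙ u)ᗮ := by
    refine Submodule.smul_mem _ _ ?_
    rw [Submodule.mem_orthogonal_singleton_iff_inner_right]
    show (inner ℝ u w : ℝ) = 0
    rw [hw]
    simp [pt, PiLp.inner_apply, Fin.sum_univ_two]
    ring
  have humem : ((inner ℝ u x : ℝ)) • u ∈ ((ℝ ∙ u)ᗮ)ᗮ :=
    Submodule.le_orthogonal_orthogonal _
      (Submodule.smul_mem _ _ (Submodule.mem_span_singleton_self u))
  refine Submodule.eq_starProjection_of_mem_orthogonal' hwmem humem ?_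
  have h0 : (inner ℝ w x : ℝ) = -(u 1) * x 0 + u 0 * x 1 := inner_pt _ _ _
  have h1 : (inner ℝ u x : ℝ) = u 0 * x 0 + u 1 * x 1 := by
    simp [PiLp.inner_apply, Fin.sum_univ_two, mul_comm]
  rw [h0, h1]
  ext i
  fin_cases i
  · simp only [Fin.zero_eta, Fin.isValue, PiLp.add_apply, PiLp.smul_apply, pt0, pt1, smul_eq_mul,
      hw]
    linear_combination (-(x 0)) * hnorm
  · simp only [Fin.mk_one, Fin.isValue, PiLp.add_apply, PiLp.smul_apply, pt0, pt1, smul_eq_mul,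
      hw]
    linear_combination (-(x 1)) * hnorm

lemma mem_hull3 {a b c x : E2} {α β γ : ℝ} (hα : 0 ≤ α) (hβ : 0 ≤ β) (hγ : 0 ≤ γ)
    (hsum : α + β + γ = 1) (hx : x = α • a + β • b + γ • c) :
    x ∈ convexHull ℝ ({a, b, c} : Set E2) := by
  have h := Finset.centerMass_mem_convexHull (s := ({a, b, c} : Set E2))
    (t := (Finset.univ : Finset (Fin 3))) (w := ![α, β, γ])
    (by intro i _; fin_cases i <;> simpa)
    (by simp [Fin.sum_univ_three]; linarith)
    (z := ![a, b, c]) (by intro i _; fin_cases i <;> simp)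
  rw [Finset.centerMass, Fin.sum_univ_three, Fin.sum_univ_three] at h
  simp only [Matrix.cons_val_zero, Matrix.cons_val_one, Matrix.head_cons,
    Matrix.cons_val_two, Matrix.tail_cons] at h
  rw [hsum, inv_one, one_smul] at h
  rwa [← hx] at h

/-- one-dimensional surjectivity onto inner-product values between two attained values -/
lemma exists_inner_eq {s : Set E2} (hc : Convex ℝ s) (w : E2) {vm vM : E2}
    (hm : vm ∈ s) (hM : vM ∈ s) {r : ℝ}
    (h1 : (inner ℝ w vm : ℝ) ≤ r) (h2 : r ≤ (inner ℝ w vM : ℝ)) :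
    ∃ z ∈ s, (inner ℝ w z : ℝ) = r := by
  set fm : ℝ := inner ℝ w vm with hfm
  set fM : ℝ := inner ℝ w vM with hfM
  rcases eq_or_lt_of_le (le_trans h1 h2) with h | h
  · exact ⟨vm, hm, by linarith⟩
  · set θ : ℝ := (r - fm) / (fM - fm) with hθ
    have hθ0 : 0 ≤ θ := div_nonneg (by linarith) (by linarith)
    have hθ1 : θ ≤ 1 := (div_le_one (by linarith)).2 (by linarith)
    refine ⟨(1 - θ) • vm + θ • vM, hc hm hM (by linarith) hθ0 (by ring), ?_⟩
    have hcan : θ * (fM - fm) = r - fm := div_mul_cancel₀ _ (by linarith)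
    rw [inner_add_right, real_inner_smul_right, real_inner_smul_right, ← hfm, ← hfM]
    linarith [hcan]

lemma s3_pos : (0:ℝ) < Real.sqrt 3 := Real.sqrt_pos.2 (by norm_num)
lemma s3_sq : Real.sqrt 3 * Real.sqrt 3 = 3 := Real.mul_self_sqrt (by norm_num)

def TriSet : Set E2 :=
  {p | 0 ≤ p 1 ∧ p 1 ≤ Real.sqrt 3 * p 0 ∧ p 1 ≤ Real.sqrt 3 * (1 - p 0)}

lemma tri_descr : Δ = TriSet := by
  have hs := s3_pos
  apply le_antisymm
  · rw [tri_eq]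
    apply convexHull_min
    · rintro p (rfl | rfl | rfl) <;>
      · simp only [TriSet, Set.mem_setOf_eq, pt0, pt1]
        refine ⟨by nlinarith, by nlinarith, by nlinarith⟩
    · intro x hx y hy a b ha hb hab
      obtain ⟨hx1, hx2, hx3⟩ := hx
      obtain ⟨hy1, hy2, hy3⟩ := hy
      have e1 := mul_le_mul_of_nonneg_left hx2 ha
      have e2 := mul_le_mul_of_nonneg_left hy2 hb
      have e3 := mul_le_mul_of_nonneg_left hx3 ha
      have e4 := mul_le_mul_of_nonneg_left hy3 hb
      have f1 := mul_nonneg ha hx1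
      have f2 := mul_nonneg hb hy1
      have hab3 : Real.sqrt 3 * a + Real.sqrt 3 * b = Real.sqrt 3 := by
        rw [← mul_add, hab, mul_one]
      have happ : ∀ i : Fin 2, (a • x + b • y) i = a * x i + b * y i := by
        intro i; simp
      refine ⟨?_, ?_, ?_⟩ <;> simp only [TriSet, Set.mem_setOf_eq, happ] <;> nlinarith
  · intro p hp
    obtain ⟨h1, h2, h3⟩ := hp
    rw [tri_eq]
    have hsne : Real.sqrt 3 ≠ 0 := ne_of_gt hs
    refine mem_hull3 (α := 1 - p 0 - p 1 / Real.sqrt 3) (β := p 0 - p 1 / Real.sqrt 3)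
      (γ := 2 * p 1 / Real.sqrt 3) ?_ ?_ ?_ (by ring) ?_
    · rw [sub_nonneg, ← sub_nonneg]
      have : p 1 / Real.sqrt 3 ≤ 1 - p 0 := by
        rw [div_le_iff₀ hs]; nlinarith
      linarith
    · have : p 1 / Real.sqrt 3 ≤ p 0 := by
        rw [div_le_iff₀ hs]; nlinarith
      linarith
    · positivity
    · ext i
      fin_cases i
      · simp only [Fin.zero_eta, Fin.isValue, PiLp.add_apply, PiLp.smul_apply, pt0, pt1,
          smul_eq_mul]
        show p 0 = _
        field_simp
        ring
      · simp only [Fin.mk_one, Fin.isValue, PiLp.add_apply, PiLp.smul_apply, pt0, pt1,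
          smul_eq_mul]
        show p 1 = _
        field_simp
        ring

end HexAux

namespace HexAux2
open HexAux

lemma hides : HidesBehind ((1/2 : ℝ) • Δ + (1/2 : ℝ) • (-Δ)) Δ := by
  intro u hu
  set w : E2 := pt (-(u 1)) (u 0) with hw
  set A : E2 := pt 0 0 with hA
  set B : E2 := pt 1 0 with hB
  set C : E2 := pt (1/2) (Real.sqrt 3 / 2) with hC
  set f : E2 → ℝ := fun z => inner ℝ w z with hf
  set m : ℝ := min (f A) (min (f B) (f C)) with hm
  set M : ℝ := max (f A) (max (f B) (f C)) with hM
  have hmM : m ≤ M := le_trans (min_le_left _ _) (le_max_left _ _)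
  have hconv : Convex ℝ Δ := convex_convexHull ℝ _
  have hAΔ : A ∈ Δ := by rw [tri_eq]; exact subset_convexHull ℝ _ (by left; rfl)
  have hBΔ : B ∈ Δ := by rw [tri_eq]; exact subset_convexHull ℝ _ (by right; left; rfl)
  have hCΔ : C ∈ Δ := by rw [tri_eq]; exact subset_convexHull ℝ _ (by right; right; rfl)
  have hbound : ∀ z ∈ Δ, m ≤ f z ∧ f z ≤ M := by
    have hsub : Δ ⊆ {z : E2 | m ≤ f z ∧ f z ≤ M} := by
      rw [tri_eq]
      apply convexHull_min
      · rintro p (rfl | rfl | rfl)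
        · exact ⟨min_le_left _ _, le_max_left _ _⟩
        · exact ⟨le_trans (min_le_right _ _) (min_le_left _ _),
            le_trans (le_max_left _ _) (le_max_right _ _)⟩
        · exact ⟨le_trans (min_le_right _ _) (min_le_right _ _),
            le_trans (le_max_right _ _) (le_max_right _ _)⟩
      · intro x hx y hy a b ha hb hab
        have hfx : f (a • x + b • y) = a * f x + b * f y := by
          simp [hf, inner_add_right, real_inner_smul_right]
        obtain ⟨hx1, hx2⟩ := hx
        obtain ⟨hy1, hy2⟩ := hy
        have e1 := mul_le_mul_of_nonneg_left hx1 ha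
        have e2 := mul_le_mul_of_nonneg_left hy1 hb
        have e3 := mul_le_mul_of_nonneg_left hx2 ha
        have e4 := mul_le_mul_of_nonneg_left hy2 hb
        have em : a * m + b * m = m := by rw [← add_mul, hab, one_mul]
        have eM : a * M + b * M = M := by rw [← add_mul, hab, one_mul]
        refine ⟨?_, ?_⟩ <;> simp only [Set.mem_setOf_eq, hfx] <;> linarith
    exact fun z hz => hsub hz
  have hattm : ∃ v ∈ Δ, f v = m := by
    rcases min_choice (f A) (min (f B) (f C)) with h | h
    · exact ⟨A, hAΔ, h.symm⟩
    · rcases min_choice (f B) (f C) with h' | h'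
      · exact ⟨B, hBΔ, (h.trans h').symm⟩
      · exact ⟨C, hCΔ, (h.trans h').symm⟩
  have hattM : ∃ v ∈ Δ, f v = M := by
    rcases max_choice (f A) (max (f B) (f C)) with h | h
    · exact ⟨A, hAΔ, h.symm⟩
    · rcases max_choice (f B) (f C) with h' | h'
      · exact ⟨B, hBΔ, (h.trans h').symm⟩
      · exact ⟨C, hCΔ, (h.trans h').symm⟩
  obtain ⟨vm, hvmΔ, hfvm⟩ := hattm
  obtain ⟨vM, hvMΔ, hfvM⟩ := hattM
  have huw : (inner ℝ u w : ℝ) = 0 := by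
    rw [hw]
    simp [pt, PiLp.inner_apply, Fin.sum_univ_two]
    ring
  refine ⟨((m + M) / 2) • w, ?_, ?_⟩
  · rw [Submodule.mem_orthogonal_singleton_iff_inner_right, real_inner_smul_right, huw, mul_zero]
  · intro q hq
    rcases Set.mem_vadd_set.1 hq with ⟨r, ⟨h, hhH, rfl⟩, rfl⟩
    rcases Set.mem_add.1 hhH with ⟨h1, hh1, h2, hh2, rfl⟩
    rcases Set.mem_smul_set.1 hh1 with ⟨x, hxΔ, rfl⟩
    rcases Set.mem_smul_set.1 hh2 with ⟨y', hy'Δ, rfl⟩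
    have hyΔ : -y' ∈ Δ := Set.mem_neg.1 hy'Δ
    have hfh : f ((1/2 : ℝ) • x + (1/2 : ℝ) • y') = (f x - f (-y')) / 2 := by
      simp [hf, inner_add_right, real_inner_smul_right, inner_neg_right]
      ring
    obtain ⟨hx1, hx2⟩ := hbound x hxΔ
    obtain ⟨hy1, hy2⟩ := hbound (-y') hyΔ
    set r : ℝ := (m + M) / 2 + f ((1/2 : ℝ) • x + (1/2 : ℝ) • y') with hr
    have hvm' : (inner ℝ w vm : ℝ) = m := hfvm
    have hvM' : (inner ℝ w vM : ℝ) = M := hfvM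
    obtain ⟨z, hzΔ, hfz⟩ := exists_inner_eq hconv w hvmΔ hvMΔ
      (r := r) (by rw [hvm', hr, hfh]; linarith) (by rw [hvM', hr, hfh]; linarith)
    refine ⟨z, hzΔ, ?_⟩
    rw [proj_formula u hu z, proj_formula u hu ((1/2 : ℝ) • x + (1/2 : ℝ) • y'), ← hw,
      vadd_eq_add, ← add_smul]
    have hz' : (inner ℝ w z : ℝ) = r := hfz
    rw [hz', hr]

end HexAux2

namespace Hex2
open HexAux

def HexSet : Set E2 := {p |
  -(Real.sqrt 3/4) ≤ p 1 ∧ p 1 ≤ Real.sqrt 3/4 ∧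
  Real.sqrt 3 * p 0 + p 1 ≤ Real.sqrt 3/2 ∧ -(Real.sqrt 3/2) ≤ Real.sqrt 3 * p 0 + p 1 ∧
  Real.sqrt 3 * p 0 - p 1 ≤ Real.sqrt 3/2 ∧ -(Real.sqrt 3/2) ≤ Real.sqrt 3 * p 0 - p 1}

lemma hex_descr : (1/2 : ℝ) • Δ + (1/2 : ℝ) • (-Δ) = HexSet := by
  have hs := s3_pos
  have hsne : Real.sqrt 3 ≠ 0 := ne_of_gt hs
  apply le_antisymm
  · intro h hh
    rcases Set.mem_add.1 hh with ⟨h1, hh1, h2, hh2, rfl⟩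
    rcases Set.mem_smul_set.1 hh1 with ⟨x, hxΔ, rfl⟩
    rcases Set.mem_smul_set.1 hh2 with ⟨y', hy'Δ, rfl⟩
    have hyΔ : -y' ∈ Δ := Set.mem_neg.1 hy'Δ
    rw [tri_descr] at hxΔ hyΔ
    obtain ⟨hx1, hx2, hx3⟩ := hxΔ
    obtain ⟨hy1, hy2, hy3⟩ := hyΔ
    simp only [PiLp.neg_apply] at hy1 hy2 hy3
    have happ : ∀ i : Fin 2,
        ((1/2 : ℝ) • x + (1/2 : ℝ) • y') i = x i / 2 + y' i / 2 := by
      intro i; simp; ring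
    refine ⟨?_, ?_, ?_, ?_, ?_, ?_⟩ <;> simp only [HexSet, Set.mem_setOf_eq, happ] <;> nlinarith
  · intro p hp
    obtain ⟨c1, c2, c3, c4, c5, c6⟩ := hp
    set s : ℝ := Real.sqrt 3 with hsdef
    set X : ℝ := 2 * p 0 with hX
    set t : ℝ := max (2 * p 1) 0 with htdef
    set t' : ℝ := max (-(2 * p 1)) 0 with ht'def
    set mx : ℝ := max t (s * X + t') with hmx
    set sx : ℝ := mx / s with hsx
    have hmulsx : s * sx = mx := by rw [hsx]; field_simp
    have ht0 : 0 ≤ t := le_max_right _ _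
    have ht'0 : 0 ≤ t' := le_max_right _ _
    have ht : t ≤ s/2 := max_le (by linarith) (by linarith)
    have ht' : t' ≤ s/2 := max_le (by linarith) (by linarith)
    have hsub : t - t' = 2 * p 1 := by
      rcases le_total 0 (p 1) with h | h
      · rw [htdef, ht'def, max_eq_left (by linarith), max_eq_right (by linarith)]; ring
      · rw [htdef, ht'def, max_eq_right (by linarith), max_eq_left (by linarith)]; ring
    have hadd : t + t' + s * X ≤ s := by
      rcases le_total 0 (p 1) with h | h
      · rw [htdef, ht'def, max_eq_left (by linarith), max_eq_right (by linarith), hX]; nlinarith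
      · rw [htdef, ht'def, max_eq_right (by linarith), max_eq_left (by linarith), hX]; nlinarith
    have hadd' : t + t' - s * X ≤ s := by
      rcases le_total 0 (p 1) with h | h
      · rw [htdef, ht'def, max_eq_left (by linarith), max_eq_right (by linarith), hX]; nlinarith
      · rw [htdef, ht'def, max_eq_right (by linarith), max_eq_left (by linarith), hX]; nlinarith
    have hxΔ : pt sx t ∈ Δ := by
      rw [tri_descr]
      refine ⟨ht0, ?_, ?_⟩
      · show t ≤ s * (pt sx t 0)
        rw [pt0, hmulsx]
        exact le_max_left _ _
      · show t ≤ s * (1 - pt sx t 0)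
        rw [pt0, mul_sub, mul_one, hmulsx, le_sub_iff_add_le, add_comm, ← le_sub_iff_add_le]
        exact max_le (by linarith) (by linarith)
    have hyΔ : pt (sx - X) t' ∈ Δ := by
      rw [tri_descr]
      refine ⟨ht'0, ?_, ?_⟩
      · show t' ≤ s * (pt (sx - X) t' 0)
        rw [pt0, mul_sub, hmulsx, le_sub_iff_add_le, add_comm]
        exact le_max_right _ _
      · show t' ≤ s * (1 - pt (sx - X) t' 0)
        rw [pt0, mul_sub, mul_one, mul_sub, hmulsx]
        have hm : mx ≤ s + s * X - t' := max_le (by linarith) (by linarith)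
        linarith
    refine Set.mem_add.2 ⟨(1/2 : ℝ) • pt sx t, Set.smul_mem_smul_set hxΔ,
      (1/2 : ℝ) • (-(pt (sx - X) t')), Set.smul_mem_smul_set (Set.neg_mem_neg.2 hyΔ), ?_⟩
    ext i
    fin_cases i
    · simp only [Fin.zero_eta, Fin.isValue, PiLp.add_apply, PiLp.smul_apply, PiLp.neg_apply,
        pt0, pt1, smul_eq_mul]
      show _ = p 0
      rw [hX]; ring
    · simp only [Fin.mk_one, Fin.isValue, PiLp.add_apply, PiLp.smul_apply, PiLp.neg_apply,
        pt0, pt1, smul_eq_mul]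
      show _ = p 1
      linarith [hsub]
end Hex2

namespace HexVol
open HexAux Hex2 Set

def Q : Set (ℝ × ℝ) := {q |
  -(Real.sqrt 3/4) ≤ q.1 ∧ q.1 ≤ Real.sqrt 3/4 ∧
  Real.sqrt 3 * q.2 + q.1 ≤ Real.sqrt 3/2 ∧ -(Real.sqrt 3/2) ≤ Real.sqrt 3 * q.2 + q.1 ∧
  Real.sqrt 3 * q.2 - q.1 ≤ Real.sqrt 3/2 ∧ -(Real.sqrt 3/2) ≤ Real.sqrt 3 * q.2 - q.1}

lemma isClosed_Q : IsClosed Q := by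
  unfold Q
  simp only [Set.setOf_and]
  refine IsClosed.inter ?_ (IsClosed.inter ?_ (IsClosed.inter ?_ (IsClosed.inter ?_
    (IsClosed.inter ?_ ?_)))) <;>
    apply isClosed_le <;> fun_prop

lemma hex_preimage : HexSet =
    (MeasurableEquiv.toLp 2 (Fin 2 → ℝ)).symm ⁻¹'
      ((MeasurableEquiv.finTwoArrow : (Fin 2 → ℝ) ≃ᵐ ℝ × ℝ) ⁻¹' (Prod.swap ⁻¹' Q)) := by
  ext p
  rfl

lemma vol_hex_eq_Q : volume HexSet = volume Q := by
  rw [hex_preimage]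
  have msQ : MeasurableSet Q := isClosed_Q.measurableSet
  have ms1 : MeasurableSet (Prod.swap ⁻¹' Q) := msQ.preimage measurable_swap
  have ms2 : MeasurableSet ((MeasurableEquiv.finTwoArrow : (Fin 2 → ℝ) ≃ᵐ ℝ × ℝ) ⁻¹'
      (Prod.swap ⁻¹' Q)) := ms1.preimage (MeasurableEquiv.measurable _)
  rw [(EuclideanSpace.volume_preserving_symm_measurableEquiv_toLp (Fin 2)).measure_preimage
    ms2.nullMeasurableSet]
  rw [(volume_preserving_finTwoArrow ℝ).measure_preimage ms1.nullMeasurableSet]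
  have hswap : MeasurePreserving (Prod.swap : ℝ × ℝ → ℝ × ℝ) volume volume := by
    rw [Measure.volume_eq_prod]
    exact Measure.measurePreserving_swap
  rw [hswap.measure_preimage msQ.nullMeasurableSet]

lemma interval_affine (a b c d : ℝ) :
    ∫ y in a..b, (c + d * y) = c * (b - a) + d * ((b^2 - a^2)/2) := by
  rw [intervalIntegral.integral_add intervalIntegrable_const
    ((by fun_prop : Continuous fun y : ℝ => d * y).intervalIntegrable _ _)]
  rw [intervalIntegral.integral_const, intervalIntegral.integral_const_mul, integral_id]
  simp [smul_eq_mul]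
  ring

lemma vol_Q : volume Q = ENNReal.ofReal (3 * Real.sqrt 3 / 8) := by
  have hs := s3_pos
  have hsne : Real.sqrt 3 ≠ 0 := ne_of_gt hs
  set s : ℝ := Real.sqrt 3 with hsdef
  rw [Measure.volume_eq_prod, Measure.prod_apply isClosed_Q.measurableSet]
  have hfun : (fun y => volume (Prod.mk y ⁻¹' Q)) =
      (Set.Icc (-(s/4)) (s/4)).indicator
        (fun y => ENNReal.ofReal ((s - 2*|y|)/s)) := by
    funext y
    by_cases hy : y ∈ Set.Icc (-(s/4)) (s/4)
    · rw [Set.indicator_of_mem hy]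
      obtain ⟨hy1, hy2⟩ := hy
      have hQy : Prod.mk y ⁻¹' Q =
          Set.Icc ((|y| - s/2)/s) ((s/2 - |y|)/s) := by
        ext x
        simp only [Q, Set.mem_preimage, Set.mem_setOf_eq, Set.mem_Icc]
        constructor
        · rintro ⟨-, -, e3, e4, e5, e6⟩
          rw [div_le_iff₀ hs, le_div_iff₀ hs]
          rcases abs_cases y with ⟨ha, hsgn⟩ | ⟨ha, hsgn⟩ <;> rw [ha] <;>
            constructor <;> nlinarith
        · intro ⟨hl, hr⟩
          rw [div_le_iff₀ hs] at hl
          rw [le_div_iff₀ hs] at hr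
          rcases abs_cases y with ⟨ha, hsgn⟩ | ⟨ha, hsgn⟩ <;> rw [ha] at hl hr <;>
            refine ⟨by linarith, by linarith, by nlinarith, by nlinarith, by nlinarith,
              by nlinarith⟩
      rw [hQy, Real.volume_Icc]
      congr 1
      field_simp
      ring
    · rw [Set.indicator_of_notMem hy]
      have hQy : Prod.mk y ⁻¹' Q = ∅ := by
        ext x
        simp only [Q, Set.mem_preimage, Set.mem_setOf_eq, Set.mem_empty_iff_false,
          iff_false, not_and]
        intro h1 h2
        exact absurd (Set.mem_Icc.2 ⟨h1, h2⟩) hy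
      rw [hQy]
      simp
  rw [hfun, lintegral_indicator measurableSet_Icc]
  have hcont : Continuous (fun y : ℝ => (s - 2*|y|)/s) := by fun_prop
  have hint : IntegrableOn (fun y : ℝ => (s - 2*|y|)/s) (Set.Icc (-(s/4)) (s/4)) volume :=
    hcont.integrableOn_Icc
  have hpos : 0 ≤ᵐ[volume.restrict (Set.Icc (-(s/4)) (s/4))]
      (fun y : ℝ => (s - 2*|y|)/s) := by
    refine (ae_restrict_iff' measurableSet_Icc).2 (ae_of_all _ fun y hy => ?_)
    obtain ⟨hy1, hy2⟩ := hy
    have : |y| ≤ s/4 := abs_le.2 ⟨hy1, hy2⟩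
    simp only [Pi.zero_apply]
    apply div_nonneg _ hs.le
    linarith
  rw [← ofReal_integral_eq_lintegral_ofReal hint hpos]
  congr 1
  rw [MeasureTheory.integral_Icc_eq_integral_Ioc,
    ← intervalIntegral.integral_of_le (by linarith : -(s/4) ≤ s/4)]
  have i1 : IntervalIntegrable (fun y : ℝ => (s - 2*|y|)/s) volume (-(s/4)) 0 :=
    hcont.intervalIntegrable _ _
  have i2 : IntervalIntegrable (fun y : ℝ => (s - 2*|y|)/s) volume 0 (s/4) :=
    hcont.intervalIntegrable _ _
  rw [← intervalIntegral.integral_add_adjacent_intervals i1 i2]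
  have e1 : ∫ y in (-(s/4))..0, (s - 2*|y|)/s = 3*s/16 := by
    rw [intervalIntegral.integral_congr (g := fun y => 1 + (2/s) * y) ?_]
    · rw [interval_affine]
      field_simp
      ring
    · intro y hy
      rw [Set.uIcc_of_le (by linarith), Set.mem_Icc] at hy
      have h' : |y| = -y := abs_of_nonpos hy.2
      show (s - 2 * |y|) / s = 1 + 2 / s * y
      rw [h']
      field_simp <;> ring
  have e2 : ∫ y in (0:ℝ)..(s/4), (s - 2*|y|)/s = 3*s/16 := by
    rw [intervalIntegral.integral_congr (g := fun y => 1 + (-(2/s)) * y) ?_]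
    · rw [interval_affine]
      field_simp
      ring
    · intro y hy
      rw [Set.uIcc_of_le (by linarith), Set.mem_Icc] at hy
      have h' : |y| = y := abs_of_nonneg hy.1
      show (s - 2 * |y|) / s = 1 + -(2 / s) * y
      rw [h']
      field_simp <;> ring
  rw [e1, e2]
  ring

end HexVol

theorem hexagon_hides_behind_triangle :
    HidesBehind ((1/2 : ℝ) • Δ + (1/2 : ℝ) • (-Δ)) Δ ∧
    volume ((1/2 : ℝ) • Δ + (1/2 : ℝ) • (-Δ)) = ENNReal.ofReal (3 * Real.sqrt 3 / 8) ∧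
    (3 * Real.sqrt 3 / 8 : ℝ) = 3 / 2 * (Real.sqrt 3 / 4) := by
  refine ⟨HexAux2.hides, ?_, by ring⟩
  rw [Hex2.hex_descr, HexVol.vol_hex_eq_Q, HexVol.vol_Q]
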